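/- Let γ = 1 − 1/√2. For every complex number z with Re z ≤ 0, one has |1 + (√2 − 1) z| ≤ |1 − γ z|². Equivalently, the stability function R(z) = (1 + (√2 − 1)z)/(1 − γz)² of the implicit part of the IMEX-SSP2(2,2,2) scheme satisfies |R(z)| ≤ 1 on the closed left half-plane; in particular, for every real y, 1 + (3 − 2√2) y² ≤ (1 + (3/2 − √2) y²)². -/

import Mathlib

lemma imex_key (s x y : ℝ) (hs : s ^ 2 = 2) (hs1 : 1 ≤ s) (hx : x ≤ 0) :
    (1 + (s - 1) * x) ^ 2 + ((s - 1) * y) ^ 2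
      ≤ ((1 - (1 - s / 2) * x) ^ 2 + ((1 - s / 2) * y) ^ 2) ^ 2 := by
  have hg : (0:ℝ) ≤ 1 - s / 2 := by nlinarith
  have hs32 : s ≤ 3 / 2 := by nlinarith
  have h1 : (0:ℝ) ≤ (1 - (1 - s / 2) * x) ^ 2 - (1 + (s - 1) * x) := by
    nlinarith [sq_nonneg ((1 - s / 2) * x)]
  have h2 : (0:ℝ) ≤ (1 - (1 - s / 2) * x) ^ 2 + (1 + (s - 1) * x) := by
    nlinarith [sq_nonneg ((1 - s / 2) * x),
      mul_nonneg (by linarith : (0:ℝ) ≤ 3 - 2 * s) (by linarith : (0:ℝ) ≤ -x)]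
  have h3 : (0:ℝ) ≤ (1 - s / 2) ^ 2 * x ^ 2 - 2 * (1 - s / 2) * x := by nlinarith
  nlinarith [mul_nonneg h1 h2, mul_nonneg (mul_nonneg (sq_nonneg (s - 1)) (sq_nonneg y)) h3,
    sq_nonneg ((1 - s / 2) ^ 2 * y ^ 2), sq_nonneg y]

/-- A-stability of the implicit part of the IMEX-SSP2(2,2,2) scheme: with
`γ = 1 − 1/√2`, for every `z` in the closed left half-plane one has
`|1 + (√2 − 1)z| ≤ |1 − γz|²`, equivalently `|R(z)| ≤ 1` for the stability function
`R(z) = (1 + (√2−1)z)/(1−γz)²`; in particular, for every real `y`,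
`1 + (3 − 2√2)y² ≤ (1 + (3/2 − √2)y²)²`. -/
theorem imex_ssp2_A_stability (γ : ℝ) (hγ : γ = 1 - 1 / Real.sqrt 2) :
    (∀ z : ℂ, z.re ≤ 0 →
      ‖1 + ((Real.sqrt 2 - 1 : ℝ) : ℂ) * z‖
          ≤ ‖1 - (γ : ℂ) * z‖ ^ 2 ∧
      ‖(1 + ((Real.sqrt 2 - 1 : ℝ) : ℂ) * z) / (1 - (γ : ℂ) * z) ^ 2‖ ≤ 1) ∧
    ∀ y : ℝ, 1 + (3 - 2 * Real.sqrt 2) * y ^ 2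
        ≤ (1 + (3 / 2 - Real.sqrt 2) * y ^ 2) ^ 2 := by
  have hs : Real.sqrt 2 ^ 2 = 2 := Real.sq_sqrt (by norm_num)
  have hs1 : 1 ≤ Real.sqrt 2 := by nlinarith [Real.sqrt_nonneg 2]
  have hsne : Real.sqrt 2 ≠ 0 := by positivity
  have hγ' : γ = 1 - Real.sqrt 2 / 2 := by
    rw [hγ]; field_simp; nlinarith
  constructor
  · intro z hz
    have key : Complex.normSq (1 + ((Real.sqrt 2 - 1 : ℝ) : ℂ) * z)
        ≤ Complex.normSq (1 - (γ : ℂ) * z) ^ 2 := by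
      have := imex_key (Real.sqrt 2) z.re z.im hs hs1 hz
      simp only [Complex.normSq_apply, Complex.add_re, Complex.add_im, Complex.sub_re,
        Complex.sub_im, Complex.one_re, Complex.one_im, Complex.mul_re, Complex.mul_im,
        Complex.ofReal_re, Complex.ofReal_im, hγ']
      ring_nf
      ring_nf at this
      linarith
    have h1 : ‖1 + ((Real.sqrt 2 - 1 : ℝ) : ℂ) * z‖
        ≤ ‖1 - (γ : ℂ) * z‖ ^ 2 := by
      have e1 : ‖1 - (γ : ℂ) * z‖ ^ 2 = Complex.normSq (1 - (γ : ℂ) * z) :=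
        Complex.sq_norm _
      rw [e1, Complex.norm_def]
      calc Real.sqrt (Complex.normSq (1 + ((Real.sqrt 2 - 1 : ℝ) : ℂ) * z))
          ≤ Real.sqrt (Complex.normSq (1 - (γ : ℂ) * z) ^ 2) := Real.sqrt_le_sqrt key
        _ = Complex.normSq (1 - (γ : ℂ) * z) := Real.sqrt_sq (Complex.normSq_nonneg _)
    refine ⟨h1, ?_⟩
    rw [norm_div, norm_pow]
    exact div_le_one_of_le₀ h1 (by positivity)
  · intro y
    nlinarith [sq_nonneg ((3 / 2 - Real.sqrt 2) * y ^ 2)]
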